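/- If X₁, X₂ are i.i.d. St. Petersburg random variables, then for integers 1 ≤ k < ℓ, P{X₁ + X₂ > 2^k + 2^ℓ} = 2·2^{-ℓ} + 2·2^{-(ℓ+k)} - 4·2^{-2ℓ}, and for ℓ = k ≥ 1, P{X₁ + X₂ > 2·2^ℓ} = 2·2^{-ℓ} - 2^{-2ℓ}. -/

import Mathlib

open MeasureTheory ProbabilityTheory Set
open scoped ENNReal

lemma geom_shift (m : ℕ) : ∑' i : ℕ, ((2:ℝ≥0∞) ^ (m+1+i))⁻¹ = ((2:ℝ≥0∞)^m)⁻¹ := by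
  have h : ∀ i : ℕ, ((2:ℝ≥0∞) ^ (m+1+i))⁻¹ = ((2:ℝ≥0∞)^m)⁻¹ * 2⁻¹ * (2⁻¹)^i := by
    intro i
    rw [pow_add, pow_add, ENNReal.mul_inv (by simp) (by simp),
      ENNReal.mul_inv (by simp) (by simp), ← ENNReal.inv_pow]
    ring
  simp_rw [h]
  rw [ENNReal.tsum_mul_left, ENNReal.tsum_geometric, ENNReal.one_sub_inv_two, inv_inv]
  rw [mul_assoc, ENNReal.inv_mul_cancel (by simp) (by simp), mul_one]

section StP
variable {Ω : Type*} [MeasurableSpace Ω] (μ : Measure Ω) [IsProbabilityMeasure μ]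
variable (Y : Ω → ℝ)

/-- support set -/
def UU : Set Ω := ⋃ i : ℕ, {ω | Y ω = 2 ^ (i+1)}

variable {Y}
variable (hmY : Measurable Y)
  (hd : ∀ k : ℕ, 1 ≤ k → μ {ω | Y ω = 2 ^ k} = ((2 : ℝ≥0∞) ^ k)⁻¹)

lemma pow2_lt {a b : ℕ} (h : a < b) : (2:ℝ)^a < 2^b :=
  pow_lt_pow_right₀ one_lt_two h

lemma pow2_le {a b : ℕ} (h : a ≤ b) : (2:ℝ)^a ≤ 2^b :=
  pow_le_pow_right₀ one_le_two h

lemma pow2_lt_iff {a b : ℕ} : (2:ℝ)^a < 2^b ↔ a < b :=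
  pow_lt_pow_iff_right₀ one_lt_two

lemma pow2_inj {a b : ℕ} (h : (2:ℝ)^a = 2^b) : a = b := by
  rcases lt_trichotomy a b with hc | hc | hc
  · exact absurd h (ne_of_lt (pow2_lt hc))
  · exact hc
  · exact absurd h.symm (ne_of_lt (pow2_lt hc))

omit [IsProbabilityMeasure μ] in
lemma meas_inter_conull {V S : Set Ω} (hV : μ Vᶜ = 0) : μ (S ∩ V) = μ S := by
  refine le_antisymm (measure_mono inter_subset_left) ?_
  calc μ S ≤ μ ((S ∩ V) ∪ Vᶜ) := measure_mono (fun ω hω => by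
        by_cases h : ω ∈ V
        · exact Or.inl ⟨hω, h⟩
        · exact Or.inr h)
    _ ≤ μ (S ∩ V) + μ Vᶜ := measure_union_le _ _
    _ = μ (S ∩ V) := by rw [hV, add_zero]

include hmY hd

lemma measUU : μ (UU Y) = 1 := by
  have hdisj : Pairwise (Function.onFun Disjoint fun i : ℕ => {ω | Y ω = 2 ^ (i+1)}) := by
    intro i j hij
    refine Set.disjoint_left.2 fun ω h1 h2 => hij ?_
    have := pow2_inj ((h1 : Y ω = _).symm.trans (h2 : Y ω = _))
    omega
  rw [UU, measure_iUnion hdisj (fun i => hmY (measurableSet_singleton _))]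
  have h := geom_shift 0
  simp only [Nat.zero_add] at h
  calc ∑' i : ℕ, μ {ω | Y ω = 2 ^ (i+1)} = ∑' i : ℕ, ((2:ℝ≥0∞) ^ (i+1))⁻¹ := by
        refine tsum_congr fun i => hd (i+1) (by omega)
    _ = 1 := by
        rw [show (1:ℝ≥0∞) = ((2:ℝ≥0∞)^(0:ℕ))⁻¹ by simp, ← geom_shift 0]
        exact tsum_congr fun i => by norm_num [Nat.add_comm]

lemma measUUc : μ (UU Y)ᶜ = 0 := by
  have : MeasurableSet (UU Y) :=
    MeasurableSet.iUnion fun i => hmY (measurableSet_singleton _)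
  rw [measure_compl this (measure_ne_top μ _), measUU μ hmY hd]
  simp


variable (hmY : Measurable Y)
  (hd : ∀ k : ℕ, 1 ≤ k → μ {ω | Y ω = 2 ^ k} = ((2 : ℝ≥0∞) ^ k)⁻¹)

omit [IsProbabilityMeasure μ] in

include hmY hd

lemma tailY (m : ℕ) : μ {ω | (2:ℝ)^m < Y ω} = ((2:ℝ≥0∞)^m)⁻¹ := by
  have hUc : μ (UU Y)ᶜ = 0 := measUUc μ hmY hd
  rw [← meas_inter_conull μ hUc]
  have hset : {ω | (2:ℝ)^m < Y ω} ∩ UU Y = ⋃ j : ℕ, {ω | Y ω = 2 ^ (m+1+j)} := by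
    ext ω
    simp only [UU, mem_inter_iff, mem_setOf_eq, mem_iUnion]
    constructor
    · rintro ⟨hlt, i, hi⟩
      rw [hi] at hlt
      have : m < i + 1 := pow2_lt_iff.1 hlt
      exact ⟨i - m, by rw [hi]; congr 1; omega⟩
    · rintro ⟨j, hj⟩
      refine ⟨by rw [hj]; exact pow2_lt (by omega), m + j, by rw [hj]; congr 1; omega⟩
  rw [hset]
  have hdisj : Pairwise (Function.onFun Disjoint fun j : ℕ => {ω | Y ω = 2 ^ (m+1+j)}) := by
    intro i j hij
    refine Set.disjoint_left.2 fun ω h1 h2 => hij ?_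
    have := pow2_inj ((h1 : Y ω = _).symm.trans (h2 : Y ω = _))
    omega
  rw [measure_iUnion hdisj (fun i => hmY (measurableSet_singleton _)), ← geom_shift m]
  exact tsum_congr fun j => hd (m+1+j) (by omega)

lemma iicY (m : ℕ) : μ {ω | Y ω ≤ (2:ℝ)^m} = 1 - ((2:ℝ≥0∞)^m)⁻¹ := by
  have h1 : {ω | Y ω ≤ (2:ℝ)^m} = {ω | (2:ℝ)^m < Y ω}ᶜ := by
    ext ω; simp [not_lt]
  have hms : MeasurableSet {ω | (2:ℝ)^m < Y ω} := hmY measurableSet_Ioi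
  rw [h1, measure_compl hms (measure_ne_top μ _), tailY μ hmY hd m, measure_univ]

lemma iooY (k n : ℕ) :
    μ {ω | (2:ℝ)^k < Y ω ∧ Y ω < 2^(k+1+n)} =
      ∑ j ∈ Finset.range n, ((2:ℝ≥0∞) ^ (k+1+j))⁻¹ := by
  have hUc : μ (UU Y)ᶜ = 0 := measUUc μ hmY hd
  rw [← meas_inter_conull μ hUc]
  have hset : {ω | (2:ℝ)^k < Y ω ∧ Y ω < 2^(k+1+n)} ∩ UU Y =
      ⋃ j ∈ Finset.range n, {ω | Y ω = 2 ^ (k+1+j)} := by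
    ext ω
    simp only [UU, mem_inter_iff, mem_setOf_eq, mem_iUnion, Finset.mem_range]
    constructor
    · rintro ⟨⟨h1, h2⟩, i, hi⟩
      rw [hi] at h1 h2
      have ha : k < i + 1 := pow2_lt_iff.1 h1
      have hb : i + 1 < k+1+n := pow2_lt_iff.1 h2
      exact ⟨i - k, ⟨by omega, by rw [hi]; congr 1; omega⟩⟩
    · rintro ⟨j, hj, hy⟩
      exact ⟨⟨by rw [hy]; exact pow2_lt (by omega),
        by rw [hy]; exact pow2_lt (by omega)⟩, k + j, by rw [hy]; congr 1; omega⟩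
  have hmeas : ∀ j : ℕ, MeasurableSet {ω | Y ω = 2 ^ (k+1+j)} :=
    fun j => hmY (measurableSet_singleton _)
  have hdisj : Set.Pairwise ↑(Finset.range n)
      (Function.onFun Disjoint fun j : ℕ => {ω | Y ω = 2 ^ (k+1+j)}) := by
    intro i _ j _ hij
    refine Set.disjoint_left.2 fun ω h1 h2 => hij ?_
    have := pow2_inj ((h1 : Y ω = _).symm.trans (h2 : Y ω = _))
    omega
  rw [hset, measure_biUnion_finset hdisj (fun j _ => hmeas j)]
  exact Finset.sum_congr rfl fun j _ => hd (k+1+j) (by omega)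

end StP


lemma pow2_lt' {a b : ℕ} (h : a < b) : (2:ℝ)^a < 2^b := pow_lt_pow_right₀ one_lt_two h
lemma pow2_lt_iff' {a b : ℕ} : (2:ℝ)^a < 2^b ↔ a < b := pow_lt_pow_iff_right₀ one_lt_two
lemma pow2_le' {a b : ℕ} (h : a ≤ b) : (2:ℝ)^a ≤ 2^b := pow_le_pow_right₀ one_le_two h
lemma pow2_le_iff' {a b : ℕ} : (2:ℝ)^a ≤ 2^b ↔ a ≤ b := pow_le_pow_iff_right₀ one_lt_two
lemma pow2_pos' (a : ℕ) : (0:ℝ) < 2^a := by positivity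
lemma pow2_succ' (a : ℕ) : (2:ℝ)^(a+1) = 2^a + 2^a := by rw [pow_succ]; ring

lemma key_iff (k n i j : ℕ) (hk : 1 ≤ k) :
    (2:ℝ)^k + 2^(k+1+n) < 2^i + 2^j ↔
      ((2:ℝ)^(k+1+n) < 2^i) ∨
      ((2:ℝ)^i = 2^(k+1+n) ∧ (2:ℝ)^k < 2^j) ∨
      (((2:ℝ)^k < 2^i ∧ (2:ℝ)^i < 2^(k+1+n)) ∧ (2:ℝ)^(k+n) < 2^j) ∨
      ((2:ℝ)^i ≤ 2^k ∧ (2:ℝ)^(k+1+n) < 2^j) := by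
  constructor
  · intro h
    rcases lt_trichotomy i (k+1+n) with hi | hi | hi
    · rcases le_or_gt i k with hik | hik
      · refine Or.inr (Or.inr (Or.inr ⟨pow2_le' hik, ?_⟩))
        by_contra hcon
        push_neg at hcon
        have h1 : (2:ℝ)^i ≤ 2^k := pow2_le' hik
        linarith
      · refine Or.inr (Or.inr (Or.inl ⟨⟨pow2_lt' hik, pow2_lt' hi⟩, ?_⟩))
        by_contra hcon
        push_neg at hcon
        have h1 : (2:ℝ)^i ≤ 2^(k+n) := pow2_le' (by omega)
        have h2 : (2:ℝ)^(k+1+n) = 2^(k+n) + 2^(k+n) := by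
          rw [show k+1+n = (k+n)+1 by omega, pow2_succ']
        have h3 : (0:ℝ) < 2^k := pow2_pos' k
        linarith
    · subst hi
      exact Or.inr (Or.inl ⟨rfl, by linarith⟩)
    · exact Or.inl (pow2_lt' hi)
  · rintro (h | ⟨h1, h2⟩ | ⟨⟨h1, h2⟩, h3⟩ | ⟨h1, h2⟩)
    · have hi : k+1+n < i := pow2_lt_iff'.1 h
      have h1 : (2:ℝ)^(k+1+n+1) ≤ 2^i := pow2_le' (by omega)
      have h2 : (2:ℝ)^(k+1+n+1) = 2^(k+1+n) + 2^(k+1+n) := pow2_succ' _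
      have h3 : (2:ℝ)^k < 2^(k+1+n) := pow2_lt' (by omega)
      have h4 : (0:ℝ) < 2^j := pow2_pos' j
      linarith
    · linarith
    · have hik : k < i := pow2_lt_iff'.1 h1
      have hkk : (2:ℝ)^(k+1) ≤ 2^i := pow2_le' (by omega)
      have h5 : (2:ℝ)^(k+1) = 2^k + 2^k := pow2_succ' _
      have hj : k+n < j := pow2_lt_iff'.1 h3
      have h6 : (2:ℝ)^(k+1+n) ≤ 2^j := pow2_le' (by omega)
      have h7 : (0:ℝ) < 2^k := pow2_pos' k
      linarith
    · have hj : k+1+n < j := pow2_lt_iff'.1 h2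
      have h3 : (2:ℝ)^(k+1+n+1) ≤ 2^j := pow2_le' (by omega)
      have h4 : (2:ℝ)^(k+1+n+1) = 2^(k+1+n) + 2^(k+1+n) := pow2_succ' _
      have h5 : (2:ℝ)^k < 2^(k+1+n) := pow2_lt' (by omega)
      have h6 : (0:ℝ) < 2^i := pow2_pos' i
      linarith

lemma key_iff2 (l i j : ℕ) :
    2*(2:ℝ)^l < 2^i + 2^j ↔
      ((2:ℝ)^l < 2^i) ∨ ((2:ℝ)^i ≤ 2^l ∧ (2:ℝ)^l < 2^j) := by
  constructor
  · intro h
    rcases lt_or_ge ((2:ℝ)^l) (2^i) with hi | hi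
    · exact Or.inl hi
    · refine Or.inr ⟨hi, ?_⟩
      by_contra hcon
      push_neg at hcon
      linarith
  · rintro (h | ⟨h1, h2⟩)
    · have hi : l < i := pow2_lt_iff'.1 h
      have h1 : (2:ℝ)^(l+1) ≤ 2^i := pow2_le' (by omega)
      have h2 : (2:ℝ)^(l+1) = 2^l + 2^l := pow2_succ' _
      have h3 : (0:ℝ) < 2^j := pow2_pos' j
      linarith
    · have hj : l < j := pow2_lt_iff'.1 h2
      have h3 : (2:ℝ)^(l+1) ≤ 2^j := pow2_le' (by omega)
      have h4 : (2:ℝ)^(l+1) = 2^l + 2^l := pow2_succ' _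
      have h5 : (0:ℝ) < 2^i := pow2_pos' i
      linarith

lemma toReal_inv_pow2 (m : ℕ) : (((2:ℝ≥0∞)^m)⁻¹).toReal = ((2:ℝ)^m)⁻¹ := by
  simp [ENNReal.toReal_inv]
lemma inv_pow2_ne_top (m : ℕ) : ((2:ℝ≥0∞)^m)⁻¹ ≠ ⊤ := by
  simp [ENNReal.inv_ne_top]
lemma inv_pow2_le_one (m : ℕ) : ((2:ℝ≥0∞)^m)⁻¹ ≤ 1 := by
  rw [ENNReal.inv_le_one]
  exact one_le_pow_of_one_le' one_le_two m
lemma toReal_one_sub_inv_pow2 (m : ℕ) :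
    ((1 : ℝ≥0∞) - ((2:ℝ≥0∞)^m)⁻¹).toReal = 1 - ((2:ℝ)^m)⁻¹ := by
  rw [ENNReal.toReal_sub_of_le (inv_pow2_le_one m) ENNReal.one_ne_top, toReal_inv_pow2,
    ENNReal.toReal_one]
lemma real_geom (k n : ℕ) :
    ∑ j ∈ Finset.range n, ((2:ℝ)^(k+1+j))⁻¹ = ((2:ℝ)^k)⁻¹ - ((2:ℝ)^(k+n))⁻¹ := by
  induction n with
  | zero => simp
  | succ n ih =>
    rw [Finset.sum_range_succ, ih, show k+1+n = (k+n)+1 from by omega,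
      show k+(n+1) = (k+n)+1 from by omega, pow_succ]
    have h2 : (0:ℝ) < 2^(k+n) := by positivity
    field_simp
    ring

section Main
variable {Ω : Type*} [MeasurableSpace Ω] (μ : Measure Ω) [IsProbabilityMeasure μ]
variable {X₁ X₂ : Ω → ℝ}

lemma part1 (hm₁ : Measurable X₁) (hm₂ : Measurable X₂)
    (hindep : IndepFun X₁ X₂ μ)
    (hd₁ : ∀ k : ℕ, 1 ≤ k → μ {ω | X₁ ω = 2 ^ k} = ((2 : ℝ≥0∞) ^ k)⁻¹)
    (hd₂ : ∀ k : ℕ, 1 ≤ k → μ {ω | X₂ ω = 2 ^ k} = ((2 : ℝ≥0∞) ^ k)⁻¹)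
    (k n : ℕ) (hk : 1 ≤ k) :
    μ {ω | (2 : ℝ) ^ k + 2 ^ (k+1+n) < X₁ ω + X₂ ω} =
      ((2:ℝ≥0∞)^(k+1+n))⁻¹ + (((2:ℝ≥0∞)^(k+1+n))⁻¹ * ((2:ℝ≥0∞)^k)⁻¹ +
        ((∑ j ∈ Finset.range n, ((2:ℝ≥0∞) ^ (k+1+j))⁻¹) * ((2:ℝ≥0∞)^(k+n))⁻¹ +
         (1 - ((2:ℝ≥0∞)^k)⁻¹) * ((2:ℝ≥0∞)^(k+1+n))⁻¹)) := by
  set L := k + 1 + n with hL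
  set E₁ : Set Ω := {ω | (2:ℝ)^L < X₁ ω} with hE₁
  set E₂ : Set Ω := {ω | X₁ ω = (2:ℝ)^L} ∩ {ω | (2:ℝ)^k < X₂ ω} with hE₂
  set E₃ : Set Ω := {ω | (2:ℝ)^k < X₁ ω ∧ X₁ ω < 2^L} ∩ {ω | (2:ℝ)^(k+n) < X₂ ω} with hE₃
  set E₄ : Set Ω := {ω | X₁ ω ≤ (2:ℝ)^k} ∩ {ω | (2:ℝ)^L < X₂ ω} with hE₄
  have hm₁s : MeasurableSet E₁ := hm₁ measurableSet_Ioi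
  have hm₂s : MeasurableSet E₂ :=
    (hm₁ (measurableSet_singleton _)).inter (hm₂ measurableSet_Ioi)
  have hm₃s : MeasurableSet E₃ := (hm₁ measurableSet_Ioo).inter (hm₂ measurableSet_Ioi)
  have hm₄s : MeasurableSet E₄ := (hm₁ measurableSet_Iic).inter (hm₂ measurableSet_Ioi)
  have hkL : (2:ℝ)^k < 2^L := pow2_lt' (by omega)
  have d3 : Disjoint E₃ E₄ := by
    refine Set.disjoint_left.2 fun ω h h' => ?_
    have h1 := h.1.1
    have h2 := h'.1
    simp only [Set.mem_setOf_eq] at h1 h2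
    linarith
  have d2 : Disjoint E₂ (E₃ ∪ E₄) := by
    refine Set.disjoint_left.2 fun ω h h' => ?_
    have h1 := h.1
    simp only [Set.mem_setOf_eq] at h1
    rcases h' with h' | h'
    · have := h'.1.2; rw [h1] at this; linarith
    · have := h'.1; simp only [Set.mem_setOf_eq] at this; rw [h1] at this; linarith
  have d1 : Disjoint E₁ (E₂ ∪ (E₃ ∪ E₄)) := by
    refine Set.disjoint_left.2 fun ω h h' => ?_
    simp only [hE₁, Set.mem_setOf_eq] at h
    rcases h' with h' | h' | h'
    · have := h'.1; simp only [Set.mem_setOf_eq] at this; rw [this] at h; linarith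
    · have := h'.1.2; linarith
    · have := h'.1; simp only [Set.mem_setOf_eq] at this; linarith
  have hμ1 : μ E₁ = ((2:ℝ≥0∞)^L)⁻¹ := tailY μ hm₁ hd₁ L
  have hμ2 : μ E₂ = ((2:ℝ≥0∞)^L)⁻¹ * ((2:ℝ≥0∞)^k)⁻¹ := by
    have h := hindep.measure_inter_preimage_eq_mul {(2:ℝ)^L} (Set.Ioi ((2:ℝ)^k))
      (measurableSet_singleton _) measurableSet_Ioi
    rw [hE₂, show ({ω | X₁ ω = (2:ℝ)^L} ∩ {ω | (2:ℝ)^k < X₂ ω}) =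
      (X₁ ⁻¹' {(2:ℝ)^L} ∩ X₂ ⁻¹' Set.Ioi ((2:ℝ)^k)) from rfl, h]
    rw [show X₁ ⁻¹' {(2:ℝ)^L} = {ω | X₁ ω = (2:ℝ)^L} from rfl,
      show X₂ ⁻¹' Set.Ioi ((2:ℝ)^k) = {ω | (2:ℝ)^k < X₂ ω} from rfl,
      hd₁ L (by omega), tailY μ hm₂ hd₂ k]
  have hμ3 : μ E₃ = (∑ j ∈ Finset.range n, ((2:ℝ≥0∞) ^ (k+1+j))⁻¹) * ((2:ℝ≥0∞)^(k+n))⁻¹ := by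
    have h := hindep.measure_inter_preimage_eq_mul (Set.Ioo ((2:ℝ)^k) ((2:ℝ)^L))
      (Set.Ioi ((2:ℝ)^(k+n))) measurableSet_Ioo measurableSet_Ioi
    rw [hE₃, show ({ω | (2:ℝ)^k < X₁ ω ∧ X₁ ω < 2^L} ∩ {ω | (2:ℝ)^(k+n) < X₂ ω}) =
      (X₁ ⁻¹' Set.Ioo ((2:ℝ)^k) ((2:ℝ)^L) ∩ X₂ ⁻¹' Set.Ioi ((2:ℝ)^(k+n))) from rfl, h]
    rw [show X₁ ⁻¹' Set.Ioo ((2:ℝ)^k) ((2:ℝ)^L) =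
      {ω | (2:ℝ)^k < X₁ ω ∧ X₁ ω < 2^(k+1+n)} from rfl,
      show X₂ ⁻¹' Set.Ioi ((2:ℝ)^(k+n)) = {ω | (2:ℝ)^(k+n) < X₂ ω} from rfl,
      iooY μ hm₁ hd₁ k n, tailY μ hm₂ hd₂ (k+n)]
  have hμ4 : μ E₄ = (1 - ((2:ℝ≥0∞)^k)⁻¹) * ((2:ℝ≥0∞)^L)⁻¹ := by
    have h := hindep.measure_inter_preimage_eq_mul (Set.Iic ((2:ℝ)^k))
      (Set.Ioi ((2:ℝ)^L)) measurableSet_Iic measurableSet_Ioi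
    rw [hE₄, show ({ω | X₁ ω ≤ (2:ℝ)^k} ∩ {ω | (2:ℝ)^L < X₂ ω}) =
      (X₁ ⁻¹' Set.Iic ((2:ℝ)^k) ∩ X₂ ⁻¹' Set.Ioi ((2:ℝ)^L)) from rfl, h]
    rw [show X₁ ⁻¹' Set.Iic ((2:ℝ)^k) = {ω | X₁ ω ≤ (2:ℝ)^k} from rfl,
      show X₂ ⁻¹' Set.Ioi ((2:ℝ)^L) = {ω | (2:ℝ)^L < X₂ ω} from rfl,
      iicY μ hm₁ hd₁ k, tailY μ hm₂ hd₂ L]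
  have hU1 : μ (UU X₁)ᶜ = 0 := measUUc μ hm₁ hd₁
  have hU2 : μ (UU X₂)ᶜ = 0 := measUUc μ hm₂ hd₂
  have hV : μ (UU X₁ ∩ UU X₂)ᶜ = 0 := by
    rw [Set.compl_inter]
    refine le_antisymm ?_ zero_le
    calc μ ((UU X₁)ᶜ ∪ (UU X₂)ᶜ) ≤ μ (UU X₁)ᶜ + μ (UU X₂)ᶜ := measure_union_le _ _
      _ = 0 := by rw [hU1, hU2, add_zero]
  have hEV : {ω | (2 : ℝ) ^ k + 2 ^ (k+1+n) < X₁ ω + X₂ ω} ∩ (UU X₁ ∩ UU X₂) =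
      (E₁ ∪ (E₂ ∪ (E₃ ∪ E₄))) ∩ (UU X₁ ∩ UU X₂) := by
    ext ω
    simp only [Set.mem_inter_iff, Set.mem_union, hE₁, hE₂, hE₃, hE₄, Set.mem_setOf_eq,
      UU, Set.mem_iUnion]
    constructor
    · rintro ⟨hE, ⟨i, hi⟩, ⟨j, hj⟩⟩
      refine ⟨?_, ⟨i, hi⟩, ⟨j, hj⟩⟩
      rw [hi, hj] at hE ⊢
      exact (key_iff k n (i+1) (j+1) hk).1 hE
    · rintro ⟨hE, ⟨i, hi⟩, ⟨j, hj⟩⟩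
      refine ⟨?_, ⟨i, hi⟩, ⟨j, hj⟩⟩
      rw [hi, hj] at hE ⊢
      exact (key_iff k n (i+1) (j+1) hk).2 hE
  calc μ {ω | (2 : ℝ) ^ k + 2 ^ (k+1+n) < X₁ ω + X₂ ω}
      = μ ({ω | (2 : ℝ) ^ k + 2 ^ (k+1+n) < X₁ ω + X₂ ω} ∩ (UU X₁ ∩ UU X₂)) :=
        (meas_inter_conull μ hV).symm
    _ = μ ((E₁ ∪ (E₂ ∪ (E₃ ∪ E₄))) ∩ (UU X₁ ∩ UU X₂)) := by rw [hEV]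
    _ = μ (E₁ ∪ (E₂ ∪ (E₃ ∪ E₄))) := meas_inter_conull μ hV
    _ = μ E₁ + (μ E₂ + (μ E₃ + μ E₄)) := by
        rw [measure_union d1 (hm₂s.union (hm₃s.union hm₄s)),
          measure_union d2 (hm₃s.union hm₄s), measure_union d3 hm₄s]
    _ = _ := by rw [hμ1, hμ2, hμ3, hμ4]

end Main

section Main2
variable {Ω : Type*} [MeasurableSpace Ω] (μ : Measure Ω) [IsProbabilityMeasure μ]
variable {X₁ X₂ : Ω → ℝ}

lemma part2 (hm₁ : Measurable X₁) (hm₂ : Measurable X₂)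
    (hindep : IndepFun X₁ X₂ μ)
    (hd₁ : ∀ k : ℕ, 1 ≤ k → μ {ω | X₁ ω = 2 ^ k} = ((2 : ℝ≥0∞) ^ k)⁻¹)
    (hd₂ : ∀ k : ℕ, 1 ≤ k → μ {ω | X₂ ω = 2 ^ k} = ((2 : ℝ≥0∞) ^ k)⁻¹)
    (l : ℕ) :
    μ {ω | 2 * (2 : ℝ) ^ l < X₁ ω + X₂ ω} =
      ((2:ℝ≥0∞)^l)⁻¹ + (1 - ((2:ℝ≥0∞)^l)⁻¹) * ((2:ℝ≥0∞)^l)⁻¹ := by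
  set F₁ : Set Ω := {ω | (2:ℝ)^l < X₁ ω} with hF₁
  set F₂ : Set Ω := {ω | X₁ ω ≤ (2:ℝ)^l} ∩ {ω | (2:ℝ)^l < X₂ ω} with hF₂
  have hm₁s : MeasurableSet F₁ := hm₁ measurableSet_Ioi
  have hm₂s : MeasurableSet F₂ := (hm₁ measurableSet_Iic).inter (hm₂ measurableSet_Ioi)
  have d1 : Disjoint F₁ F₂ := by
    refine Set.disjoint_left.2 fun ω h h' => ?_
    simp only [hF₁, Set.mem_setOf_eq] at h
    have := h'.1; simp only [Set.mem_setOf_eq] at this; linarith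
  have hμ1 : μ F₁ = ((2:ℝ≥0∞)^l)⁻¹ := tailY μ hm₁ hd₁ l
  have hμ2 : μ F₂ = (1 - ((2:ℝ≥0∞)^l)⁻¹) * ((2:ℝ≥0∞)^l)⁻¹ := by
    have h := hindep.measure_inter_preimage_eq_mul (Set.Iic ((2:ℝ)^l))
      (Set.Ioi ((2:ℝ)^l)) measurableSet_Iic measurableSet_Ioi
    rw [hF₂, show ({ω | X₁ ω ≤ (2:ℝ)^l} ∩ {ω | (2:ℝ)^l < X₂ ω}) =
      (X₁ ⁻¹' Set.Iic ((2:ℝ)^l) ∩ X₂ ⁻¹' Set.Ioi ((2:ℝ)^l)) from rfl, h]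
    rw [show X₁ ⁻¹' Set.Iic ((2:ℝ)^l) = {ω | X₁ ω ≤ (2:ℝ)^l} from rfl,
      show X₂ ⁻¹' Set.Ioi ((2:ℝ)^l) = {ω | (2:ℝ)^l < X₂ ω} from rfl,
      iicY μ hm₁ hd₁ l, tailY μ hm₂ hd₂ l]
  have hU1 : μ (UU X₁)ᶜ = 0 := measUUc μ hm₁ hd₁
  have hU2 : μ (UU X₂)ᶜ = 0 := measUUc μ hm₂ hd₂
  have hV : μ (UU X₁ ∩ UU X₂)ᶜ = 0 := by
    rw [Set.compl_inter]
    refine le_antisymm ?_ zero_le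
    calc μ ((UU X₁)ᶜ ∪ (UU X₂)ᶜ) ≤ μ (UU X₁)ᶜ + μ (UU X₂)ᶜ := measure_union_le _ _
      _ = 0 := by rw [hU1, hU2, add_zero]
  have hEV : {ω | 2 * (2 : ℝ) ^ l < X₁ ω + X₂ ω} ∩ (UU X₁ ∩ UU X₂) =
      (F₁ ∪ F₂) ∩ (UU X₁ ∩ UU X₂) := by
    ext ω
    simp only [Set.mem_inter_iff, Set.mem_union, hF₁, hF₂, Set.mem_setOf_eq,
      UU, Set.mem_iUnion]
    constructor
    · rintro ⟨hE, ⟨i, hi⟩, ⟨j, hj⟩⟩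
      refine ⟨?_, ⟨i, hi⟩, ⟨j, hj⟩⟩
      rw [hi, hj] at hE ⊢
      exact (key_iff2 l (i+1) (j+1)).1 hE
    · rintro ⟨hE, ⟨i, hi⟩, ⟨j, hj⟩⟩
      refine ⟨?_, ⟨i, hi⟩, ⟨j, hj⟩⟩
      rw [hi, hj] at hE ⊢
      exact (key_iff2 l (i+1) (j+1)).2 hE
  calc μ {ω | 2 * (2 : ℝ) ^ l < X₁ ω + X₂ ω}
      = μ ({ω | 2 * (2 : ℝ) ^ l < X₁ ω + X₂ ω} ∩ (UU X₁ ∩ UU X₂)) :=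
        (meas_inter_conull μ hV).symm
    _ = μ ((F₁ ∪ F₂) ∩ (UU X₁ ∩ UU X₂)) := by rw [hEV]
    _ = μ (F₁ ∪ F₂) := meas_inter_conull μ hV
    _ = μ F₁ + μ F₂ := measure_union d1 hm₂s
    _ = _ := by rw [hμ1, hμ2]

end Main2

theorem stmt_2 {Ω : Type*} [MeasurableSpace Ω] (μ : Measure Ω) [IsProbabilityMeasure μ]
    (X₁ X₂ : Ω → ℝ) (hm₁ : Measurable X₁) (hm₂ : Measurable X₂)
    (hindep : IndepFun X₁ X₂ μ)
    (hd₁ : ∀ k : ℕ, 1 ≤ k → μ {ω | X₁ ω = 2 ^ k} = ((2 : ℝ≥0∞) ^ k)⁻¹)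
    (hd₂ : ∀ k : ℕ, 1 ≤ k → μ {ω | X₂ ω = 2 ^ k} = ((2 : ℝ≥0∞) ^ k)⁻¹) :
    (∀ k l : ℕ, 1 ≤ k → k < l →
      (μ {ω | (2 : ℝ) ^ k + 2 ^ l < X₁ ω + X₂ ω}).toReal =
        2 * ((2 : ℝ) ^ l)⁻¹ + 2 * ((2 : ℝ) ^ (l + k))⁻¹ - 4 * ((2 : ℝ) ^ (2 * l))⁻¹) ∧
    (∀ l : ℕ, 1 ≤ l →
      (μ {ω | 2 * (2 : ℝ) ^ l < X₁ ω + X₂ ω}).toReal =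
        2 * ((2 : ℝ) ^ l)⁻¹ - ((2 : ℝ) ^ (2 * l))⁻¹) := by
  constructor
  · intro k l hk hkl
    obtain ⟨n, rfl⟩ : ∃ n, l = k + 1 + n := ⟨l - (k+1), by omega⟩
    rw [part1 μ hm₁ hm₂ hindep hd₁ hd₂ k n hk]
    have hsum_ne : (∑ j ∈ Finset.range n, ((2:ℝ≥0∞) ^ (k+1+j))⁻¹) ≠ ⊤ :=
      (ENNReal.sum_lt_top.2 fun j _ => (inv_pow2_ne_top _).lt_top).ne
    rw [ENNReal.toReal_add (inv_pow2_ne_top _)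
        (by exact ENNReal.add_ne_top.2 ⟨ENNReal.mul_ne_top (inv_pow2_ne_top _) (inv_pow2_ne_top _),
          ENNReal.add_ne_top.2 ⟨ENNReal.mul_ne_top hsum_ne (inv_pow2_ne_top _),
            ENNReal.mul_ne_top (ENNReal.sub_ne_top ENNReal.one_ne_top) (inv_pow2_ne_top _)⟩⟩),
      ENNReal.toReal_add (ENNReal.mul_ne_top (inv_pow2_ne_top _) (inv_pow2_ne_top _))
        (ENNReal.add_ne_top.2 ⟨ENNReal.mul_ne_top hsum_ne (inv_pow2_ne_top _),
          ENNReal.mul_ne_top (ENNReal.sub_ne_top ENNReal.one_ne_top) (inv_pow2_ne_top _)⟩),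
      ENNReal.toReal_add (ENNReal.mul_ne_top hsum_ne (inv_pow2_ne_top _))
        (ENNReal.mul_ne_top (ENNReal.sub_ne_top ENNReal.one_ne_top) (inv_pow2_ne_top _)),
      ENNReal.toReal_mul, ENNReal.toReal_mul, ENNReal.toReal_mul,
      ENNReal.toReal_sum (fun j _ => inv_pow2_ne_top _)]
    simp only [toReal_inv_pow2, toReal_one_sub_inv_pow2]
    rw [real_geom]
    have h1 : (0:ℝ) < 2^k := by positivity
    have h2 : (0:ℝ) < 2^n := by positivity
    simp only [two_mul, pow_add, pow_one]
    field_simp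
    ring
  · intro l hl
    rw [part2 μ hm₁ hm₂ hindep hd₁ hd₂ l]
    rw [ENNReal.toReal_add (inv_pow2_ne_top _)
        (ENNReal.mul_ne_top (ENNReal.sub_ne_top ENNReal.one_ne_top) (inv_pow2_ne_top _)),
      ENNReal.toReal_mul]
    simp only [toReal_inv_pow2, toReal_one_sub_inv_pow2]
    have h1 : (0:ℝ) < 2^l := by positivity
    simp only [two_mul, pow_add]
    field_simp
    ring
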